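/- Let L > 0, let g^u, g^v ∈ C²([0,L];ℝ), let â ∈ C¹([0,L];ℝ) with â(L) = 0, let f̂ : ℝ → ℝ be continuous, and let ǔ, v̌ : [0,L] → ℝ be continuous. Assume that for every x ∈ [0,L] one has (â·(g^u)')'(x) + f̂(g^u(x)) = ǔ(x) and (â·(g^v)')'(x) + f̂(g^v(x)) = v̌(x). Then for every x ∈ [0,L]: (g^v)'(x)·∫_x^L f̂(g^u(ξ)) dξ − (g^u)'(x)·∫_x^L f̂(g^v(ξ)) dξ = (g^v)'(x)·∫_x^L ǔ(ξ) dξ − (g^u)'(x)·∫_x^L v̌(ξ) dξ. -/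

import Mathlib

open Set intervalIntegral

lemma elim_key
    (L : ℝ)
    (gu : ℝ → ℝ) (hgu : ContDiff ℝ 2 gu)
    (ahat : ℝ → ℝ) (hahat : ContDiff ℝ 1 ahat) (hahatL : ahat L = 0)
    (fhat : ℝ → ℝ) (hfhat : Continuous fhat)
    (ucheck : ℝ → ℝ)
    (hequ : ∀ x ∈ Icc (0:ℝ) L,
      deriv (fun y => ahat y * deriv gu y) x + fhat (gu x) = ucheck x)
    (x : ℝ) (hx : x ∈ Icc (0:ℝ) L) :
    (∫ ξ in x..L, fhat (gu ξ)) = (∫ ξ in x..L, ucheck ξ) + ahat x * deriv gu x := by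
  have hderiv : ContDiff ℝ 1 (deriv gu) := by
    have hgu' : ContDiff ℝ ((1:ℕ∞) + 1) gu := by norm_num; exact_mod_cast hgu
    exact (contDiff_succ_iff_deriv.mp hgu').2.2
  have hh : ContDiff ℝ 1 (fun y => ahat y * deriv gu y) := hahat.mul hderiv
  have hhd : Differentiable ℝ (fun y => ahat y * deriv gu y) := hh.differentiable one_ne_zero
  have hhc : Continuous (deriv (fun y => ahat y * deriv gu y)) :=
    hh.continuous_deriv le_rfl
  have hftc : (∫ ξ in x..L, deriv (fun y => ahat y * deriv gu y) ξ)
      = ahat L * deriv gu L - ahat x * deriv gu x :=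
    intervalIntegral.integral_deriv_eq_sub (fun y _ => hhd y) (hhc.intervalIntegrable x L)
  have hsub : uIcc x L ⊆ Icc (0:ℝ) L := by
    rw [uIcc_of_le hx.2]
    exact Icc_subset_Icc hx.1 le_rfl
  have hcong : (∫ ξ in x..L, ucheck ξ)
      = ∫ ξ in x..L, (deriv (fun y => ahat y * deriv gu y) ξ + fhat (gu ξ)) := by
    apply intervalIntegral.integral_congr
    intro ξ hξ
    exact (hequ ξ (hsub hξ)).symm
  have hint2 : IntervalIntegrable (fun ξ => fhat (gu ξ)) MeasureTheory.volume x L :=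
    (hfhat.comp hgu.continuous).intervalIntegrable x L
  rw [hcong, intervalIntegral.integral_add (hhc.intervalIntegrable x L) hint2, hftc, hahatL]
  ring

/-- Elimination of the diffusion-coefficient difference `ahat` from the projected
system in the inverse problem with two final-time observations. -/
theorem elimination_of_ahat
    (L : ℝ) (hL : 0 < L)
    (gu gv : ℝ → ℝ) (hgu : ContDiff ℝ 2 gu) (hgv : ContDiff ℝ 2 gv)
    (ahat : ℝ → ℝ) (hahat : ContDiff ℝ 1 ahat) (hahatL : ahat L = 0)
    (fhat : ℝ → ℝ) (hfhat : Continuous fhat)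
    (ucheck vcheck : ℝ → ℝ) (hucheck : Continuous ucheck) (hvcheck : Continuous vcheck)
    (hequ : ∀ x ∈ Icc (0:ℝ) L,
      deriv (fun y => ahat y * deriv gu y) x + fhat (gu x) = ucheck x)
    (heqv : ∀ x ∈ Icc (0:ℝ) L,
      deriv (fun y => ahat y * deriv gv y) x + fhat (gv x) = vcheck x) :
    ∀ x ∈ Icc (0:ℝ) L,
      deriv gv x * (∫ ξ in x..L, fhat (gu ξ)) - deriv gu x * (∫ ξ in x..L, fhat (gv ξ)) =
      deriv gv x * (∫ ξ in x..L, ucheck ξ) - deriv gu x * (∫ ξ in x..L, vcheck ξ) := by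
  intro x hx
  rw [elim_key L gu hgu ahat hahat hahatL fhat hfhat ucheck hequ x hx,
    elim_key L gv hgv ahat hahat hahatL fhat hfhat vcheck heqv x hx]
  ring
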